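/- Let p be an odd rational prime, K a finite separable extension of F = 𝔽_p(t), O_K the integral closure of 𝔽_p[t] in K, S a finite set of places of K containing all the infinite places, S_fin its set of finite places, S_∞ its set of infinite places, and h_K the ideal class number of O_K. Then there is a constant C₁ ≥ 0 such that for every non-zero x ∈ O_{K,S} there exist non-zero a ∈ O_{K,S} and non-zero b ∈ O_K with x = a/b, ord_𝔭(a) ≥ −h_K for every 𝔭 ∈ S_fin, and ord_𝔮(b) ≤ C₁ for every 𝔮 ∈ S_∞; moreover, for every 𝔭 ∈ S_fin, if ord_𝔭(a) > 0 then ord_𝔭(b) = 0. -/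

import Mathlib

open FirstOrder Language IsDedekindDomain Polynomial

set_option linter.unusedSectionVars false
set_option maxHeartbeats 1600000
set_option maxRecDepth 8000
set_option synthInstance.maxHeartbeats 400000

namespace Paper

section HolomorphyRings

variable {R : Type*} [CommRing R] [IsDedekindDomain R]
variable {K : Type*} [Field K] [Algebra R K] [IsFractionRing R K]

/-- The subring of elements of `K` that are integral at every prime satisfying `P`. -/
def integralAt (P : HeightOneSpectrum R → Prop) : Subring K where
  carrier := {x : K | ∀ v : HeightOneSpectrum R, P v → v.valuation K x ≤ 1}
  zero_mem' := fun v _ => by simp only [Valuation.map_zero]; exact zero_le_one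
  one_mem' := fun v _ => le_of_eq (Valuation.map_one _)
  add_mem' := fun {x y} hx hy v hv =>
    le_trans (Valuation.map_add _ x y) (max_le (hx v hv) (hy v hv))
  mul_mem' := fun {x y} hx hy v hv => by
    rw [Valuation.map_mul]; exact mul_le_one' (hx v hv) (hy v hv)
  neg_mem' := fun {x} hx v hv => by rw [Valuation.map_neg]; exact hx v hv

theorem mem_integralAt {P : HeightOneSpectrum R → Prop} {x : K} :
    x ∈ (integralAt P : Subring K) ↔
      ∀ v : HeightOneSpectrum R, P v → v.valuation K x ≤ 1 :=
  Iff.rfl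

theorem algebraMap_mem_integralAt (P : HeightOneSpectrum R → Prop) (r : R) :
    algebraMap R K r ∈ (integralAt P : Subring K) :=
  fun v _ => v.valuation_le_one r

/-- The normalized additive `v`-adic valuation of an element of `K`, as an integer
(with junk value `0` at `x = 0`). -/
noncomputable def ordAt (v : HeightOneSpectrum R) (x : K) : ℤ :=
  if h : v.valuation K x = 0 then 0 else - Multiplicative.toAdd (WithZero.unzero h)

end HolomorphyRings

section OrdAtLemmas

open Multiplicative

variable {R : Type*} [CommRing R] [IsDedekindDomain R]
variable {K : Type*} [Field K] [Algebra R K] [IsFractionRing R K]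

theorem valuation_eq_ordAt (v : HeightOneSpectrum R) {x : K} (hx : x ≠ 0) :
    v.valuation K x = ((Multiplicative.ofAdd (-(ordAt v x)) : Multiplicative ℤ) :
      WithZero (Multiplicative ℤ)) := by
  have h : v.valuation K x ≠ 0 := (Valuation.ne_zero_iff _).mpr hx
  rw [ordAt, dif_neg h, neg_neg, ofAdd_toAdd, WithZero.coe_unzero]

theorem ordAt_eq (v : HeightOneSpectrum R) {x : K} (hx : x ≠ 0) {n : ℤ}
    (h : v.valuation K x = ((Multiplicative.ofAdd (-n) : Multiplicative ℤ) :
      WithZero (Multiplicative ℤ))) : ordAt v x = n := by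
  have h2 := WithZero.coe_inj.mp ((valuation_eq_ordAt v hx).symm.trans h)
  have h3 : -(ordAt v x) = -n := by simpa using congrArg Multiplicative.toAdd h2
  omega

theorem ordAt_one (v : HeightOneSpectrum R) : ordAt v (1 : K) = 0 :=
  ordAt_eq v one_ne_zero (by simp)

theorem ordAt_mul (v : HeightOneSpectrum R) {x y : K} (hx : x ≠ 0) (hy : y ≠ 0) :
    ordAt v (x * y) = ordAt v x + ordAt v y := by
  refine ordAt_eq v (mul_ne_zero hx hy) ?_
  rw [Valuation.map_mul, valuation_eq_ordAt v hx, valuation_eq_ordAt v hy,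
    ← WithZero.coe_mul, ← ofAdd_add, neg_add]

theorem ordAt_pow (v : HeightOneSpectrum R) {x : K} (hx : x ≠ 0) (n : ℕ) :
    ordAt v (x ^ n) = n * ordAt v x := by
  induction n with
  | zero => simpa using ordAt_one (K := K) v
  | succ n ih =>
      rw [pow_succ, ordAt_mul v (pow_ne_zero n hx) hx, ih]
      push_cast
      ring

theorem ordAt_prod {ι : Type*} (v : HeightOneSpectrum R) (s : Finset ι) (f : ι → K)
    (hf : ∀ i ∈ s, f i ≠ 0) :
    ordAt v (∏ i ∈ s, f i) = ∑ i ∈ s, ordAt v (f i) := by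
  classical
  induction s using Finset.induction_on with
  | empty => simpa using ordAt_one (K := K) v
  | @insert a s' hmem ih =>
      rw [Finset.prod_insert hmem, Finset.sum_insert hmem,
        ordAt_mul v (hf a (Finset.mem_insert_self a s'))
          (Finset.prod_ne_zero_iff.mpr fun i hi => hf i (Finset.mem_insert_of_mem hi)),
        ih (fun i hi => hf i (Finset.mem_insert_of_mem hi))]

theorem ordAt_span_pow (v : HeightOneSpectrum R) {π : R} (hπ : π ≠ 0) {h : ℕ}
    (hspan : Ideal.span {π} = v.asIdeal ^ h) :
    ordAt v (algebraMap R K π) = (h : ℤ) := by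
  have hx : algebraMap R K π ≠ 0 := fun hz =>
    hπ ((injective_iff_map_eq_zero _).mp (IsFractionRing.injective R K) _ hz)
  have h0 := valuation_eq_ordAt v hx
  rw [HeightOneSpectrum.valuation_of_algebraMap, HeightOneSpectrum.intValuation_apply] at h0
  have h1 : v.intValuationDef π ≤ Multiplicative.ofAdd (-(h : ℤ)) :=
    (v.intValuation_le_pow_iff_dvd π h).mpr (by rw [hspan])
  have h2 : ¬ v.intValuationDef π ≤ Multiplicative.ofAdd (-((h + 1 : ℕ) : ℤ)) := by
    change ¬ v.intValuation π ≤ WithZero.exp (-((h + 1 : ℕ) : ℤ))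
    rw [v.intValuation_le_pow_iff_dvd π (h + 1), hspan]
    exact fun hdvd => (Ideal.pow_succ_lt_pow v.ne_bot h).not_ge (Ideal.le_of_dvd hdvd)
  rw [h0, WithZero.coe_le_coe, Multiplicative.ofAdd_le] at h1 h2
  push_cast at h1 h2
  omega

theorem ordAt_unit (v : HeightOneSpectrum R) {r : R} (hr : r ≠ 0) (hmem : r ∉ v.asIdeal) :
    ordAt v (algebraMap R K r) = 0 := by
  have hx : algebraMap R K r ≠ 0 := fun hz =>
    hr ((injective_iff_map_eq_zero _).mp (IsFractionRing.injective R K) _ hz)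
  refine ordAt_eq v hx ?_
  rw [HeightOneSpectrum.valuation_of_algebraMap, HeightOneSpectrum.intValuation_apply]
  have hlt : ¬ v.intValuationDef r < 1 := by
    change ¬ v.intValuation r < 1
    rw [v.intValuation_lt_one_iff_dvd, Ideal.dvd_span_singleton]
    exact hmem
  have h1 : v.intValuationDef r = 1 :=
    le_antisymm (v.intValuation_le_one r) (not_lt.mp hlt)
  rw [h1]
  simp

end OrdAtLemmas

section FunctionFieldSetting

variable (p : ℕ) [Fact p.Prime]
variable (K : Type*) [Field K] [Algebra (RatFunc (ZMod p)) K]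
  [Algebra (Polynomial (ZMod p)) K]
  [IsScalarTower (Polynomial (ZMod p)) (RatFunc (ZMod p)) K]
  [FunctionField (ZMod p) K]
  [Algebra.IsSeparable (RatFunc (ZMod p)) K]

/-- The ring of integers of the function field `K`: the integral closure of
`𝔽_p[t]` in `K`. -/
noncomputable abbrev OK := FunctionField.ringOfIntegers (ZMod p) K

/-- The image in `O_K` of a polynomial over `𝔽_p`. -/
noncomputable def polyToOK (f : Polynomial (ZMod p)) : OK p K :=
  ⟨algebraMap (Polynomial (ZMod p)) K f, isIntegral_algebraMap⟩

/-- The holomorphy ring `O_{K,S}` when `S` consists of all the infinite places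
together with the finite set `Sf` of finite places: the elements of `K` integral
at every finite place outside `Sf`. -/
noncomputable abbrev holoFin (Sf : Finset (HeightOneSpectrum (OK p K))) : Subring K :=
  integralAt (fun v => v ∉ Sf)

/-- The holomorphy ring `O_{K,S}` when `S` is the complement of the finite set `T`
of finite places: the elements of `K` integral at each prime of `T`. -/
noncomputable abbrev holoCof (T : Finset (HeightOneSpectrum (OK p K))) : Subring K :=
  integralAt (fun v => v ∈ T)

theorem polyMem_holoFin (Sf : Finset (HeightOneSpectrum (OK p K)))
    (f : Polynomial (ZMod p)) :
    algebraMap (Polynomial (ZMod p)) K f ∈ holoFin p K Sf :=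
  algebraMap_mem_integralAt _ (polyToOK p K f)

/-- The image of `t` in `K`. -/
noncomputable def tK : K := algebraMap (RatFunc (ZMod p)) K RatFunc.X

theorem tK_eqPoly : tK p K = algebraMap (Polynomial (ZMod p)) K Polynomial.X := by
  rw [IsScalarTower.algebraMap_apply (Polynomial (ZMod p)) (RatFunc (ZMod p)) K,
    RatFunc.algebraMap_X]
  rfl

theorem tK_mem (Pr : HeightOneSpectrum (OK p K) → Prop) :
    tK p K ∈ (integralAt Pr : Subring K) := by
  rw [tK_eqPoly]
  exact algebraMap_mem_integralAt _ (polyToOK p K Polynomial.X)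

/-- The valuation subring at infinity of `𝔽_p(t)` (consisting of the rational
functions of degree at most `0`). -/
noncomputable def inftyVSR : ValuationSubring (RatFunc (ZMod p)) :=
  letI := Classical.decEq (RatFunc (ZMod p))
  (FunctionField.inftyValuation (ZMod p)).valuationSubring

/-- The infinite places of `K`: the valuation subrings of `K` lying above the
place at infinity of `𝔽_p(t)`. -/
noncomputable def InfPlace : Type _ :=
  {V : ValuationSubring K // V.comap (algebraMap (RatFunc (ZMod p)) K) = inftyVSR p}

/-- The number of infinite places of `K`. -/
noncomputable def numInfPlaces : ℕ := Nat.card (InfPlace p K)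

/-- The infinite places of `K` together with their normalized (surjective,
`ℤ`-valued) additive valuations: `W` enumerates, without repetition, all the
valuation subrings of `K` lying above the place at infinity of `𝔽_p(t)`, and
`ord i` is the corresponding normalized additive valuation. -/
structure InfData where
  /-- the number `s_∞` of infinite places -/
  s : ℕ
  pos : 0 < s
  /-- the valuation subrings at the infinite places -/
  W : Fin s → ValuationSubring K
  inj : Function.Injective W
  above : ∀ i, (W i).comap (algebraMap (RatFunc (ZMod p)) K) = inftyVSR p
  complete : ∀ V : ValuationSubring K,
    V.comap (algebraMap (RatFunc (ZMod p)) K) = inftyVSR p → ∃ i, V = W i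
  /-- the normalized additive valuations `ord_{∞_i}` -/
  ord : Fin s → K → ℤ
  ord_mul : ∀ i (x y : K), x ≠ 0 → y ≠ 0 → ord i (x * y) = ord i x + ord i y
  ord_add : ∀ i (x y : K), x ≠ 0 → y ≠ 0 → x + y ≠ 0 →
    min (ord i x) (ord i y) ≤ ord i (x + y)
  ord_surj : ∀ i (n : ℤ), ∃ x : K, x ≠ 0 ∧ ord i x = n
  mem_iff : ∀ i (x : K), x ≠ 0 → (x ∈ W i ↔ 0 ≤ ord i x)

/-- `ord_min(x) = min {ord_{∞_i}(x) : i = 1, …, s_∞}`. -/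
noncomputable def ordMin (I : InfData p K) (x : K) : ℤ :=
  haveI : Nonempty (Fin I.s) := Fin.pos_iff_nonempty.mp I.pos
  Finset.univ.inf' Finset.univ_nonempty (fun i => I.ord i x)


/-- The ideal class number `h_K` of `O_K`. -/
noncomputable def classNum : ℕ := Nat.card (ClassGroup (OK p K))

theorem ordI_one (I : InfData p K) (i : Fin I.s) : I.ord i (1 : K) = 0 := by
  have := I.ord_mul i 1 1 one_ne_zero one_ne_zero
  rw [mul_one] at this
  omega

theorem ordI_pow (I : InfData p K) (i : Fin I.s) {x : K} (hx : x ≠ 0) (n : ℕ) :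
    I.ord i (x ^ n) = n * I.ord i x := by
  induction n with
  | zero => simpa using ordI_one p K I i
  | succ n ih =>
      rw [pow_succ, I.ord_mul i _ _ (pow_ne_zero n hx) hx, ih]
      push_cast
      ring

theorem ordI_prod {ι : Type*} (I : InfData p K) (i : Fin I.s) (s : Finset ι) (f : ι → K)
    (hf : ∀ j ∈ s, f j ≠ 0) :
    I.ord i (∏ j ∈ s, f j) = ∑ j ∈ s, I.ord i (f j) := by
  classical
  induction s using Finset.induction_on with
  | empty => simpa using ordI_one p K I i
  | @insert a s' hmem ih =>
      rw [Finset.prod_insert hmem, Finset.sum_insert hmem,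
        I.ord_mul i _ _ (hf a (Finset.mem_insert_self a s'))
          (Finset.prod_ne_zero_iff.mpr fun j hj => hf j (Finset.mem_insert_of_mem hj)),
        ih (fun j hj => hf j (Finset.mem_insert_of_mem hj))]

theorem ordI_poly_neg (I : InfData p K) (i : Fin I.s) {q : Polynomial (ZMod p)}
    (hq : q ≠ 0) (hdeg : 0 < q.natDegree) :
    I.ord i (algebraMap (Polynomial (ZMod p)) K q) ≤ -1 := by
  letI := Classical.decEq (RatFunc (ZMod p))
  have hinj : Function.Injective (algebraMap (Polynomial (ZMod p)) K) := by
    rw [IsScalarTower.algebraMap_eq (Polynomial (ZMod p)) (RatFunc (ZMod p)) K]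
    exact (algebraMap (RatFunc (ZMod p)) K).injective.comp (IsFractionRing.injective _ _)
  have hz : algebraMap (Polynomial (ZMod p)) K q ≠ 0 := fun h =>
    hq ((injective_iff_map_eq_zero _).mp hinj _ h)
  by_contra hcon
  push_neg at hcon
  have hmem : algebraMap (Polynomial (ZMod p)) K q ∈ I.W i :=
    (I.mem_iff i _ hz).mpr (by omega)
  have hmem2 : algebraMap (Polynomial (ZMod p)) (RatFunc (ZMod p)) q ∈ inftyVSR p := by
    rw [← I.above i, ValuationSubring.mem_comap, ← IsScalarTower.algebraMap_apply]
    exact hmem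
  have h3 : RatFunc.inftyValuationDef (ZMod p)
      (algebraMap (Polynomial (ZMod p)) (RatFunc (ZMod p)) q) ≤ 1 := hmem2
  rw [RatFunc.inftyValuation.polynomial (F := ZMod p) hq, ← WithZero.exp_zero (M := ℤ),
    WithZero.exp_le_exp] at h3
  omega

/-- **Lemma (key lemma).** There is a constant `C₁ ≥ 0` such that every nonzero
`x ∈ O_{K,S}` can be written as `x = a/b` with `a ∈ O_{K,S}` nonzero,
`b ∈ O_K` nonzero, `ord_𝔭(a) ≥ -h_K` for every `𝔭 ∈ S_fin`, `ord_𝔮(b) ≤ C₁` for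
every infinite place `𝔮`, and such that for `𝔭 ∈ S_fin`, `ord_𝔭(a) > 0` implies
`ord_𝔭(b) = 0`. -/
theorem exists_good_fraction (hp2 : p ≠ 2)
    (Sf : Finset (HeightOneSpectrum (OK p K))) (I : InfData p K) :
    ∃ C₁ : ℕ, ∀ x : K, x ∈ holoFin p K Sf → x ≠ 0 →
      ∃ a b : K, a ∈ holoFin p K Sf ∧ a ≠ 0 ∧ b ∈ OK p K ∧ b ≠ 0 ∧ x = a / b ∧
        (∀ 𝔭 ∈ Sf, -(classNum p K : ℤ) ≤ ordAt 𝔭 a) ∧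
        (∀ i : Fin I.s, I.ord i b ≤ (C₁ : ℤ)) ∧
        (∀ 𝔭 ∈ Sf, 0 < ordAt 𝔭 a → ordAt 𝔭 b = 0) := by
  classical
  have hinjOK : Function.Injective (algebraMap ↥(OK p K) K) := IsFractionRing.injective _ _
  have hinjP : Function.Injective (algebraMap (Polynomial (ZMod p)) K) := by
    rw [IsScalarTower.algebraMap_eq (Polynomial (ZMod p)) (RatFunc (ZMod p)) K]
    exact (algebraMap (RatFunc (ZMod p)) K).injective.comp (IsFractionRing.injective _ _)
  set h : ℕ := classNum p K with hhdef
  have hcard : h = Nat.card (ClassGroup (OK p K)) := rfl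
  have hpos : 0 < h := by rw [hcard]; exact Nat.card_pos
  -- generators of 𝔭 ^ h
  have hgen : ∀ 𝔭 : HeightOneSpectrum (OK p K),
      ∃ π : ↥(OK p K), π ≠ 0 ∧ Ideal.span {π} = 𝔭.asIdeal ^ h := by
    intro 𝔭
    have hmem : 𝔭.asIdeal ∈ nonZeroDivisors (Ideal ↥(OK p K)) :=
      mem_nonZeroDivisors_iff_ne_zero.mpr 𝔭.ne_bot
    have hmem2 : 𝔭.asIdeal ^ h ∈ nonZeroDivisors (Ideal ↥(OK p K)) := pow_mem hmem h
    have hone : ClassGroup.mk0 ⟨𝔭.asIdeal ^ h, hmem2⟩ = 1 := by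
      have heq : (⟨𝔭.asIdeal ^ h, hmem2⟩ : nonZeroDivisors (Ideal ↥(OK p K))) = ⟨𝔭.asIdeal, hmem⟩ ^ h :=
        Subtype.ext (by simp)
      rw [heq, map_pow, hcard, pow_card_eq_one']
    obtain ⟨π, hπ⟩ := ((ClassGroup.mk0_eq_one_iff hmem2).mp hone).principal
    refine ⟨π, fun hπ0 => ?_, hπ.symm⟩
    obtain ⟨y, hy, hy0⟩ := Submodule.exists_mem_ne_zero_of_ne_bot 𝔭.ne_bot
    have hyh : y ^ h ∈ 𝔭.asIdeal ^ h := Ideal.pow_mem_pow hy h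
    rw [hπ, hπ0, Submodule.span_zero_singleton, Submodule.mem_bot] at hyh
    exact hy0 ((pow_eq_zero_iff hpos.ne').mp hyh)
  choose πf hπ0 hπspan using hgen
  -- nonzero polynomials below each finite prime
  have hbelow : ∀ 𝔭 : HeightOneSpectrum (OK p K), ∃ c : Polynomial (ZMod p), c ≠ 0 ∧
      algebraMap (Polynomial (ZMod p)) ↥(OK p K) c ∈ 𝔭.asIdeal := by
    intro 𝔭
    obtain ⟨y, hy, hy0⟩ := Submodule.exists_mem_ne_zero_of_ne_bot 𝔭.ne_bot
    have hne : Ideal.comap (algebraMap (Polynomial (ZMod p)) ↥(OK p K)) 𝔭.asIdeal ≠ ⊥ :=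
      Ideal.comap_ne_bot_of_integral_mem hy0 hy
        (IsIntegralClosure.isIntegral (Polynomial (ZMod p)) K y)
    obtain ⟨c, hc, hc0⟩ := Submodule.exists_mem_ne_zero_of_ne_bot hne
    exact ⟨c, hc0, Ideal.mem_comap.mp hc⟩
  choose cf hcf0 hcfmem using hbelow
  -- an irreducible polynomial avoiding all primes of Sf
  obtain ⟨q₀, hq₀irr, hq₀not⟩ : ∃ q : Polynomial (ZMod p), Irreducible q ∧
      ∀ 𝔭 ∈ Sf, algebraMap (Polynomial (ZMod p)) ↥(OK p K) q ∉ 𝔭.asIdeal := by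
    set C : Polynomial (ZMod p) := ∏ 𝔭 ∈ Sf, cf 𝔭 with hC
    have hC0 : C ≠ 0 := Finset.prod_ne_zero_iff.mpr fun 𝔭 _ => hcf0 𝔭
    set M : Polynomial (ZMod p) := C * Polynomial.X + 1 with hM
    have hcoeff : M.coeff (C.natDegree + 1) = C.coeff C.natDegree := by
      rw [hM, Polynomial.coeff_add, Polynomial.coeff_mul_X, Polynomial.coeff_one,
        if_neg (Nat.succ_ne_zero C.natDegree), add_zero]
    have hlc : C.coeff C.natDegree ≠ 0 := fun hz =>
      hC0 (Polynomial.leadingCoeff_eq_zero.mp hz)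
    have hM0 : M ≠ 0 := by
      intro hzero
      rw [hzero, Polynomial.coeff_zero] at hcoeff
      exact hlc hcoeff.symm
    have hdegM : C.natDegree + 1 ≤ M.natDegree :=
      Polynomial.le_natDegree_of_ne_zero (by rw [hcoeff]; exact hlc)
    have hMu : ¬ IsUnit M := by
      intro hu
      have h0 := Polynomial.isUnit_iff_degree_eq_zero.mp hu
      have : M.natDegree = 0 :=
        Polynomial.natDegree_eq_zero_iff_degree_le_zero.mpr (le_of_eq h0)
      omega
    obtain ⟨q, hqirr, hqdvd⟩ := WfDvdMonoid.exists_irreducible_factor hMu hM0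
    refine ⟨q, hqirr, fun 𝔭 h𝔭 hqmem => ?_⟩
    have hmax : (Ideal.span {q}).IsMaximal :=
      PrincipalIdealRing.isMaximal_of_irreducible hqirr
    have hle : Ideal.span {q} ≤
        Ideal.comap (algebraMap (Polynomial (ZMod p)) ↥(OK p K)) 𝔭.asIdeal := by
      rw [Ideal.span_le, Set.singleton_subset_iff]
      exact Ideal.mem_comap.mpr hqmem
    have hne : Ideal.comap (algebraMap (Polynomial (ZMod p)) ↥(OK p K)) 𝔭.asIdeal ≠ ⊤ := by
      intro htop
      have h1 : (1 : Polynomial (ZMod p)) ∈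
          Ideal.comap (algebraMap (Polynomial (ZMod p)) ↥(OK p K)) 𝔭.asIdeal := by
        rw [htop]; trivial
      rw [Ideal.mem_comap, map_one] at h1
      exact 𝔭.isPrime.ne_top ((Ideal.eq_top_iff_one _).mpr h1)
    have heq := hmax.eq_of_le hne hle
    have hcmem2 : cf 𝔭 ∈ Ideal.span {q} := by
      rw [heq]; exact Ideal.mem_comap.mpr (hcfmem 𝔭)
    have hdvd1 : q ∣ cf 𝔭 := Ideal.mem_span_singleton.mp hcmem2
    have hdvdC : q ∣ C := hdvd1.trans (Finset.dvd_prod_of_mem cf h𝔭)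
    have hsub : M - C * Polynomial.X = 1 := by rw [hM]; ring
    have hq1 : q ∣ 1 := hsub ▸ dvd_sub hqdvd (hdvdC.mul_right Polynomial.X)
    exact hqirr.not_isUnit (isUnit_of_dvd_one hq1)
  -- the element q₀ in O_K and in K
  set q₀O : ↥(OK p K) := algebraMap (Polynomial (ZMod p)) ↥(OK p K) q₀ with hq₀O
  set q₀K : K := algebraMap (Polynomial (ZMod p)) K q₀ with hq₀K
  have hq₀tower : algebraMap ↥(OK p K) K q₀O = q₀K := by
    rw [hq₀O, hq₀K, ← IsScalarTower.algebraMap_apply]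
  have hq₀K0 : q₀K ≠ 0 := fun hzero =>
    hq₀irr.ne_zero ((injective_iff_map_eq_zero _).mp hinjP _ hzero)
  have hq₀O0 : q₀O ≠ 0 := by
    intro hzero
    apply hq₀K0
    rw [← hq₀tower, hzero, map_zero]
  have hq₀ordI : ∀ i : Fin I.s, I.ord i q₀K ≤ -1 := fun i =>
    ordI_poly_neg p K I i hq₀irr.ne_zero hq₀irr.natDegree_pos
  -- the elements π in K
  set πK : HeightOneSpectrum (OK p K) → K := fun 𝔭 => algebraMap ↥(OK p K) K (πf 𝔭) with hπK
  have hπK0 : ∀ 𝔭, πK 𝔭 ≠ 0 := fun 𝔭 hzero =>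
    hπ0 𝔭 ((injective_iff_map_eq_zero _).mp hinjOK _ hzero)
  have hπKmem : ∀ 𝔭, πK 𝔭 ∈ OK p K := by
    intro 𝔭
    simp only [hπK, Subalgebra.algebraMap_eq]
    exact SetLike.coe_mem _
  -- the bound N
  set N : ℕ := Finset.sup Sf (fun 𝔭 => Finset.sup Finset.univ
      (fun i : Fin I.s => (I.ord i (πK 𝔭)).toNat)) with hN
  have hNle : ∀ 𝔭 ∈ Sf, ∀ i : Fin I.s, I.ord i (πK 𝔭) ≤ (N : ℤ) := by
    intro 𝔭 h𝔭 i
    have hB := Finset.le_sup (f := fun 𝔮 => Finset.sup Finset.univ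
      (fun j : Fin I.s => (I.ord j (πK 𝔮)).toNat)) h𝔭
    beta_reduce at hB
    rw [← hN] at hB
    have hA := Finset.le_sup (f := fun j : Fin I.s => (I.ord j (πK 𝔭)).toNat)
      (Finset.mem_univ i)
    beta_reduce at hA
    omega
  -- the elements τ
  set τK : HeightOneSpectrum (OK p K) → K := fun 𝔭 => πK 𝔭 * q₀K ^ N with hτK
  have hτ0 : ∀ 𝔭, τK 𝔭 ≠ 0 := fun 𝔭 => mul_ne_zero (hπK0 𝔭) (pow_ne_zero N hq₀K0)
  have hq₀Kmem : q₀K ∈ OK p K := by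
    rw [hq₀K]
    exact isIntegral_algebraMap
  have hτmem : ∀ 𝔭, τK 𝔭 ∈ OK p K := fun 𝔭 =>
    mul_mem (hπKmem 𝔭) (pow_mem hq₀Kmem N)
  -- finite valuations of the τ's
  have hordq₀ : ∀ 𝔭 ∈ Sf, ordAt 𝔭 q₀K = 0 := by
    intro 𝔭 h𝔭
    have := ordAt_unit (K := K) 𝔭 hq₀O0 (hq₀not 𝔭 h𝔭)
    rwa [hq₀tower] at this
  have hordπ_self : ∀ 𝔭, ordAt 𝔭 (πK 𝔭) = (h : ℤ) := fun 𝔭 =>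
    ordAt_span_pow 𝔭 (hπ0 𝔭) (hπspan 𝔭)
  have hordπ_other : ∀ 𝔭 𝔮 : HeightOneSpectrum (OK p K), 𝔭 ≠ 𝔮 → ordAt 𝔭 (πK 𝔮) = 0 := by
    intro 𝔭 𝔮 hne
    refine ordAt_unit 𝔭 (hπ0 𝔮) ?_
    intro hmem
    have h1 : Ideal.span {πf 𝔮} ≤ 𝔭.asIdeal := by
      rw [Ideal.span_le, Set.singleton_subset_iff]; exact hmem
    rw [hπspan 𝔮] at h1
    have h2 : 𝔮.asIdeal ≤ 𝔭.asIdeal := Ideal.IsPrime.le_of_pow_le h1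
    have h3 : 𝔮.asIdeal = 𝔭.asIdeal :=
      (Ring.DimensionLeOne.prime_le_prime_iff_eq 𝔮.ne_bot).mp h2
    exact hne (HeightOneSpectrum.ext h3.symm)
  have hτord_self : ∀ 𝔭 ∈ Sf, ordAt 𝔭 (τK 𝔭) = (h : ℤ) := by
    intro 𝔭 h𝔭
    simp only [hτK]
    rw [ordAt_mul 𝔭 (hπK0 𝔭) (pow_ne_zero N hq₀K0), ordAt_pow 𝔭 hq₀K0 N,
      hordπ_self 𝔭, hordq₀ 𝔭 h𝔭, mul_zero, add_zero]
  have hτord_other : ∀ 𝔭 ∈ Sf, ∀ 𝔮 : HeightOneSpectrum (OK p K), 𝔭 ≠ 𝔮 →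
      ordAt 𝔭 (τK 𝔮) = 0 := by
    intro 𝔭 h𝔭 𝔮 hne
    simp only [hτK]
    rw [ordAt_mul 𝔭 (hπK0 𝔮) (pow_ne_zero N hq₀K0), ordAt_pow 𝔭 hq₀K0 N,
      hordπ_other 𝔭 𝔮 hne, hordq₀ 𝔭 h𝔭, mul_zero, add_zero]
  have hτordI : ∀ 𝔭 ∈ Sf, ∀ i : Fin I.s, I.ord i (τK 𝔭) ≤ 0 := by
    intro 𝔭 h𝔭 i
    simp only [hτK]
    rw [I.ord_mul i _ _ (hπK0 𝔭) (pow_ne_zero N hq₀K0), ordI_pow p K I i hq₀K0 N]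
    have h1 := hNle 𝔭 h𝔭 i
    have h2 := hq₀ordI i
    have h3 : (N : ℤ) * I.ord i q₀K ≤ (N : ℤ) * (-1) :=
      mul_le_mul_of_nonneg_left h2 (by positivity)
    linarith
  -- now the main construction
  refine ⟨0, ?_⟩
  intro x hx hx0
  set k : HeightOneSpectrum (OK p K) → ℕ := fun 𝔭 => (-(ordAt 𝔭 x)).toNat / h with hk
  set b : K := ∏ 𝔭 ∈ Sf, τK 𝔭 ^ k 𝔭 with hb
  have hb0 : b ≠ 0 := by
    rw [hb]
    exact Finset.prod_ne_zero_iff.mpr fun 𝔭 _ => pow_ne_zero _ (hτ0 𝔭)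
  have hbmem : b ∈ OK p K := by
    rw [hb]
    exact prod_mem fun 𝔭 _ => pow_mem (hτmem 𝔭) _
  have hbval : ∀ v : HeightOneSpectrum (OK p K), v.valuation K b ≤ 1 := by
    intro v
    have h1 : v.valuation K (algebraMap ↥(OK p K) K (⟨b, hbmem⟩ : ↥(OK p K))) ≤ 1 :=
      v.valuation_le_one _
    rwa [Subalgebra.algebraMap_eq] at h1
  have hordb : ∀ 𝔭 ∈ Sf, ordAt 𝔭 b = (k 𝔭 : ℤ) * h := by
    intro 𝔭 h𝔭
    rw [hb, ordAt_prod 𝔭 Sf _ (fun 𝔮 _ => pow_ne_zero _ (hτ0 𝔮))]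
    rw [Finset.sum_eq_single 𝔭]
    · rw [ordAt_pow 𝔭 (hτ0 𝔭) (k 𝔭), hτord_self 𝔭 h𝔭]
    · intro 𝔮 h𝔮 hne
      rw [ordAt_pow 𝔭 (hτ0 𝔮) (k 𝔮), hτord_other 𝔭 h𝔭 𝔮 (Ne.symm hne), mul_zero]
    · intro habs
      exact absurd h𝔭 habs
  have hk_eq : ∀ 𝔭 ∈ Sf, ordAt 𝔭 x < 0 →
      ordAt 𝔭 x + (k 𝔭 : ℤ) * h = -(((-(ordAt 𝔭 x)).toNat % h : ℕ) : ℤ) := by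
    intro 𝔭 h𝔭 hneg
    set m : ℕ := (-(ordAt 𝔭 x)).toNat with hm
    have hmx : (m : ℤ) = -(ordAt 𝔭 x) := Int.toNat_of_nonneg (by omega)
    have hdiv : m % h + h * (m / h) = m := Nat.mod_add_div m h
    have hdivZ : ((m % h : ℕ) : ℤ) + (h : ℤ) * ((m / h : ℕ) : ℤ) = (m : ℤ) := by
      exact_mod_cast hdiv
    have hkval : (k 𝔭 : ℤ) = ((m / h : ℕ) : ℤ) := by rw [hk]
    rw [hkval]
    linarith
  refine ⟨x * b, b, ?_, mul_ne_zero hx0 hb0, hbmem, hb0,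
    by rw [mul_div_assoc, div_self hb0, mul_one], ?_, ?_, ?_⟩
  · -- x * b ∈ holoFin
    refine mem_integralAt.mpr fun v hv => ?_
    rw [Valuation.map_mul]
    exact mul_le_one' (mem_integralAt.mp hx v hv) (hbval v)
  · -- lower bound at finite places of S
    intro 𝔭 h𝔭
    rw [ordAt_mul 𝔭 hx0 hb0, hordb 𝔭 h𝔭]
    rcases le_or_gt 0 (ordAt 𝔭 x) with hc | hc
    · have h1 : (0 : ℤ) ≤ (k 𝔭 : ℤ) * h := by positivity
      have h2 : (0 : ℤ) ≤ (h : ℤ) := by positivity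
      linarith
    · have he := hk_eq 𝔭 h𝔭 hc
      have hmod : (-(ordAt 𝔭 x)).toNat % h < h := Nat.mod_lt _ hpos
      have hmodZ : ((((-(ordAt 𝔭 x)).toNat % h : ℕ)) : ℤ) < (h : ℤ) := by exact_mod_cast hmod
      linarith
  · -- bound at infinite places
    intro i
    have h1 : I.ord i b ≤ 0 := by
      rw [hb, ordI_prod p K I i Sf _ (fun 𝔮 _ => pow_ne_zero _ (hτ0 𝔮))]
      refine Finset.sum_nonpos fun 𝔮 h𝔮 => ?_
      rw [ordI_pow p K I i (hτ0 𝔮) (k 𝔮)]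
      have h2 := hτordI 𝔮 h𝔮 i
      have h3 : (k 𝔮 : ℤ) * I.ord i (τK 𝔮) ≤ (k 𝔮 : ℤ) * 0 :=
        mul_le_mul_of_nonneg_left h2 (by positivity)
      simpa using h3
    simpa using h1
  · -- positivity of a forces triviality of b
    intro 𝔭 h𝔭 hposa
    rw [ordAt_mul 𝔭 hx0 hb0, hordb 𝔭 h𝔭] at hposa
    rw [hordb 𝔭 h𝔭]
    rcases le_or_gt 0 (ordAt 𝔭 x) with hc | hc
    · have hk0 : k 𝔭 = 0 := by
        rw [hk]
        simp only []
        rw [Int.toNat_of_nonpos (by omega)]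
        exact Nat.zero_div h
      rw [hk0]
      simp
    · exfalso
      have he := hk_eq 𝔭 h𝔭 hc
      have hmodZ : (0 : ℤ) ≤ ((((-(ordAt 𝔭 x)).toNat % h : ℕ)) : ℤ) := by positivity
      linarith
end FunctionFieldSetting


end Paper
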